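/- The map T preserves the multiset of edges: if T(π, σ) = (π′, σ′), then the multiset of pairs {(i, π(i)) : i ∈ dom π} ∪ {(i, σ(i)) : i ∈ dom σ} equals {(i, π′(i)) : i ∈ dom π′} ∪ {(i, σ′(i)) : i ∈ dom σ′}. Consequently, for any matrix A, ∏ a_{i,π(i)} · ∏ a_{i,σ(i)} = ∏ a_{i,π′(i)} · ∏ a_{i,σ′(i)}. -/

import Mathlib

/- We work with `n + 2` people of each sex (so the number of people is at least 2),
men and women both indexed by `Fin (n+2)`; man `0` is "Mr. 1" and man `Fin.last (n+1)`
is "Mr. n", and similarly for women.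

A pair `(π, σ)` of total permutations of `Fin (n+2)` encodes an element of one of the
sets `A(n)`, `B(n)`, `C(n)` of pairs (marriage matching, affair matching) of
Zeilberger's proof, via dummy values at the unused points:
* `A(n)`: `π` is the marriage matching of all men to all women, and the affair
  matching `{2,…,n-1} → {2',…,(n-1)'}` is encoded by a permutation `σ` fixing the
  endpoints `0` and `last`.
* `B(n)`: the marriage matching `{1,…,n-1} → {1',…,(n-1)'}` is encoded by `π` with the
  dummy value `π last = last`, and the affair matching `{2,…,n} → {2',…,n'}` by `σ`
  with dummy value `σ 0 = 0`.
* `C(n)`: the marriage matching `{1,…,n-1} → {2',…,n'}` is encoded by `π` with dummy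
  value `π last = 0`, and the affair matching `{2,…,n} → {1',…,(n-1)'}` by `σ` with
  dummy value `σ 0 = last`. -/

/-- A pair (marriages, affairs) of permutations. -/
abbrev PairPerm (n : ℕ) := Equiv.Perm (Fin (n + 2)) × Equiv.Perm (Fin (n + 2))

/-- The last index (Mr./Ms. `n`). -/
def lastF (n : ℕ) : Fin (n + 2) := Fin.last (n + 1)

/-- The middle indices `{2,…,n-1}` (people having affairs in `A(n)`). -/
def middleF (n : ℕ) : Finset (Fin (n + 2)) := (Finset.univ.erase 0).erase (lastF n)

/-- Membership in `A(n)`: the affair permutation fixes the two endpoints. -/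
def InA {n : ℕ} (p : PairPerm n) : Prop := p.2 0 = 0 ∧ p.2 (lastF n) = lastF n

/-- Membership in `B(n)`: dummy marriage `n ↦ n'`, dummy affair `1 ↦ 1'`. -/
def InB {n : ℕ} (p : PairPerm n) : Prop := p.1 (lastF n) = lastF n ∧ p.2 0 = 0

/-- Membership in `C(n)`: dummy marriage `n ↦ 1'`, dummy affair `1 ↦ n'`. -/
def InC {n : ℕ} (p : PairPerm n) : Prop := p.1 (lastF n) = 0 ∧ p.2 0 = lastF n

/-- The alternating chain of men: `m 0 = n`, and `m (k+1)` is the lover of the wife of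
`m k` (wife: apply `π`; lover: apply `σ⁻¹`). -/
def chainM {n : ℕ} (p : PairPerm n) : ℕ → Fin (n + 2)
  | 0 => lastF n
  | k + 1 => p.2.symm (p.1 (chainM p k))

/-- The alternating chain of women: `w k` is the wife of `m k`. -/
def chainW {n : ℕ} (p : PairPerm n) (k : ℕ) : Fin (n + 2) := p.1 (chainM p k)

/-- `TStep p q` says that `q` is obtained from `p` by Zeilberger's map `T`: along the
alternating chain `m 0 = n, w 0, m 1, w 1, …` of `p`, which terminates at the first
woman `w (r-1) ∈ {1', n'}`, marriages `(m k, w k)` become affairs and affairs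
`(m (k+1), w k)` become marriages; everything off the chain is unchanged, and the
dummy values are set according to whether the chain ended at `1'` or at `n'`. -/
def TStep {n : ℕ} (p q : PairPerm n) : Prop :=
  ∃ r : ℕ, 1 ≤ r ∧
    (∀ k, k + 1 < r → chainW p k ≠ 0 ∧ chainW p k ≠ lastF n) ∧
    (chainW p (r - 1) = 0 ∨ chainW p (r - 1) = lastF n) ∧
    (∀ i, (∀ k, k < r → i ≠ chainM p k) → q.1 i = p.1 i) ∧
    (∀ i, i ≠ 0 → (∀ k, k < r → i ≠ chainM p k) → q.2 i = p.2 i) ∧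
    (∀ k, k + 1 < r → q.1 (chainM p (k + 1)) = chainW p k) ∧
    q.1 (lastF n) = chainW p (r - 1) ∧
    (∀ k, k < r → q.2 (chainM p k) = chainW p k) ∧
    q.2 0 = (if chainW p (r - 1) = 0 then lastF n else 0)

/-- `T` preserves the multiset of (man, woman) relationship edges: the marriages of
`p ∈ A(n)` (all men) together with its affairs (middle men) form the same multiset as
the marriages of `q = T p` (men other than `n`) together with its affairs (men other
than `1`).  Consequently the corresponding products of matrix entries agree. -/
theorem T_preserves_edges {n : ℕ} (p q : PairPerm n) (hp : InA p) (h : TStep p q) :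
    (Finset.univ.val.map (fun i => (i, p.1 i)) +
        (middleF n).val.map (fun i => (i, p.2 i)) =
      (Finset.univ.erase (lastF n)).val.map (fun i => (i, q.1 i)) +
        (Finset.univ.erase 0).val.map (fun i => (i, q.2 i))) ∧
    ∀ (R : Type) [CommRing R] (A : Fin (n + 2) → Fin (n + 2) → R),
      (∏ i, A i (p.1 i)) * (∏ i ∈ middleF n, A i (p.2 i)) =
        (∏ i ∈ Finset.univ.erase (lastF n), A i (q.1 i)) *
          ∏ i ∈ Finset.univ.erase 0, A i (q.2 i) := by
  classical
  obtain ⟨r, hr1, hne, _hend, hq1off, hq2off, hq1chain, _hq1last, hq2chain, _hq2zero⟩ := h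
  set S : Finset (Fin (n + 2)) := (Finset.range r).image (chainM p) with hSdef
  have hmemS : ∀ i, i ∈ S ↔ ∃ k, k < r ∧ chainM p k = i := by
    intro i; simp [hSdef]
  have hlast0 : (lastF n : Fin (n + 2)) ≠ 0 := by
    simp [lastF, Fin.ext_iff]
  have hlastS : lastF n ∈ S := (hmemS _).2 ⟨0, hr1, rfl⟩
  have h0S : (0 : Fin (n + 2)) ∉ S := by
    rw [hmemS]
    rintro ⟨k, hk, hk0⟩
    match k with
    | 0 => exact hlast0 hk0
    | j + 1 =>
      have : p.1 (chainM p j) = p.2 0 := by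
        have := congrArg p.2 hk0
        simpa [chainM] using this
      rw [hp.1] at this
      exact (hne j hk).1 this
  -- pointwise equalities on the pieces
  have hg2S : ∀ i ∈ S, q.2 i = p.1 i := by
    intro i hi
    obtain ⟨k, hk, rfl⟩ := (hmemS i).1 hi
    exact hq2chain k hk
  have hg1S : ∀ i ∈ S, i ≠ lastF n → q.1 i = p.2 i := by
    intro i hi hil
    obtain ⟨k, hk, rfl⟩ := (hmemS i).1 hi
    match k with
    | 0 => exact absurd rfl hil
    | j + 1 =>
      rw [hq1chain j hk]
      simp [chainM, chainW]
  have hg1U : ∀ i, i ∉ S → q.1 i = p.1 i := by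
    intro i hi
    refine hq1off i fun k hk hik => hi ((hmemS i).2 ⟨k, hk, hik.symm⟩)
  have hg2U : ∀ i, i ∉ S → i ≠ 0 → q.2 i = p.2 i := by
    intro i hi hi0
    refine hq2off i hi0 fun k hk hik => hi ((hmemS i).2 ⟨k, hk, hik.symm⟩)
  -- Finset partitions
  have hfu1 : Finset.univ.filter (· ∈ S) = S := by
    ext i; simp
  have hfu2 : (middleF n).filter (· ∈ S) = S.erase (lastF n) := by
    ext i
    simp only [middleF, Finset.mem_filter, Finset.mem_erase, Finset.mem_univ, and_true]
    constructor
    · rintro ⟨⟨h1, h2⟩, h3⟩; exact ⟨h1, h3⟩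
    · rintro ⟨h1, h2⟩
      exact ⟨⟨h1, fun h => h0S (h ▸ h2)⟩, h2⟩
  have hfu3 : (middleF n).filter (· ∉ S) = (Finset.univ.erase 0).filter (· ∉ S) := by
    ext i
    simp only [middleF, Finset.mem_filter, Finset.mem_erase, Finset.mem_univ, and_true]
    constructor
    · rintro ⟨⟨h1, h2⟩, h3⟩; exact ⟨h2, h3⟩
    · rintro ⟨h1, h2⟩
      exact ⟨⟨fun h => h2 (h ▸ hlastS), h1⟩, h2⟩
  have hfu4 : (Finset.univ.erase (lastF n)).filter (· ∈ S) = S.erase (lastF n) := by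
    ext i
    simp only [Finset.mem_filter, Finset.mem_erase, Finset.mem_univ, and_true]
  have hfu5 : (Finset.univ.erase (lastF n)).filter (· ∉ S) = Finset.univ.filter (· ∉ S) := by
    ext i
    simp only [Finset.mem_filter, Finset.mem_erase, Finset.mem_univ, and_true, true_and]
    exact ⟨fun h => h.2, fun h => ⟨fun he => h (he ▸ hlastS), h⟩⟩
  have hfu6 : (Finset.univ.erase 0).filter (· ∈ S) = S := by
    ext i
    simp only [Finset.mem_filter, Finset.mem_erase, Finset.mem_univ, and_true, true_and]
    exact ⟨fun h => h.2, fun h => ⟨fun he => h0S (he ▸ h), h⟩⟩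
  -- multiset splitting along S
  have split : ∀ (t : Finset (Fin (n + 2))) (f : Fin (n + 2) → Fin (n + 2) × Fin (n + 2)),
      t.val.map f = (t.filter (· ∈ S)).val.map f + (t.filter (· ∉ S)).val.map f := by
    intro t f
    rw [Finset.filter_val, Finset.filter_val, ← Multiset.map_add,
      Multiset.filter_add_not]
  have key : Finset.univ.val.map (fun i => (i, p.1 i)) +
        (middleF n).val.map (fun i => (i, p.2 i)) =
      (Finset.univ.erase (lastF n)).val.map (fun i => (i, q.1 i)) +
        (Finset.univ.erase 0).val.map (fun i => (i, q.2 i)) := by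
    rw [split Finset.univ (fun i => (i, p.1 i)), split (middleF n) (fun i => (i, p.2 i)),
      split (Finset.univ.erase (lastF n)) (fun i => (i, q.1 i)),
      split (Finset.univ.erase 0) (fun i => (i, q.2 i)),
      hfu1, hfu2, hfu3, hfu4, hfu5, hfu6]
    have e1 : S.val.map (fun i => (i, p.1 i)) =
        S.val.map (fun i => (i, q.2 i)) := by
      refine Multiset.map_congr rfl fun x hx => ?_
      rw [hg2S x hx]
    have e2 : (S.erase (lastF n)).val.map (fun i => (i, p.2 i)) =
        (S.erase (lastF n)).val.map (fun i => (i, q.1 i)) := by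
      refine Multiset.map_congr rfl fun x hx => ?_
      have hx' := Finset.mem_erase.1 (Finset.mem_val.mp hx)
      rw [hg1S x hx'.2 hx'.1]
    have e3 : (Finset.univ.filter (· ∉ S)).val.map (fun i => (i, p.1 i)) =
        (Finset.univ.filter (· ∉ S)).val.map (fun i => (i, q.1 i)) := by
      refine Multiset.map_congr rfl fun x hx => ?_
      have hx' := (Finset.mem_filter.1 (Finset.mem_val.mp hx)).2
      rw [hg1U x hx']
    have e4 : ((Finset.univ.erase 0).filter (· ∉ S)).val.map (fun i => (i, p.2 i)) =
        ((Finset.univ.erase 0).filter (· ∉ S)).val.map (fun i => (i, q.2 i)) := by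
      refine Multiset.map_congr rfl fun x hx => ?_
      have hx' := Finset.mem_filter.1 (Finset.mem_val.mp hx)
      rw [hg2U x hx'.2 (Finset.mem_erase.1 hx'.1).1]
    rw [e1, e2, e3, e4]
    abel
  refine ⟨key, fun R _ A => ?_⟩
  have prodeq : ∀ (t : Finset (Fin (n + 2))) (f : Fin (n + 2) → Fin (n + 2)),
      (∏ i ∈ t, A i (f i)) =
        ((t.val.map (fun i => (i, f i))).map (fun e => A e.1 e.2)).prod := by
    intro t f
    rw [Finset.prod_eq_multiset_prod, Multiset.map_map]
    rfl
  rw [prodeq Finset.univ (fun i => p.1 i), prodeq (middleF n) (fun i => p.2 i),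
    prodeq (Finset.univ.erase (lastF n)) (fun i => q.1 i),
    prodeq (Finset.univ.erase 0) (fun i => q.2 i),
    ← Multiset.prod_add, ← Multiset.prod_add, ← Multiset.map_add, ← Multiset.map_add, key]
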